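/- There exists a constant C > 0 such that the following holds. Let X be a measurable space, N and T positive integers, D a probability distribution on X × {0,1}, (A_t)_{t=1}^T an adaptive predictor rule with values in the grid Z, and k a best-response selection for L^cvx. Let (x_1,y_1),…,(x_T,y_T) be i.i.d. with law D and set p_t = A_t((x_1,y_1),…,(x_{t−1},y_{t−1})). Then for every δ ∈ (0, 1/T], with probability at least 1 − δ, the supremum over all families (ℓ_v)_{v∈Z} with ℓ_v ∈ L^cvx of | Σ_{t=1}^T ℓ_{p_t(x_t)}(k_{ℓ_{p_t(x_t)}}(p_t(x_t)), y_t) − Σ_{t=1}^T E_{(x,y)∼D}[ ℓ_{p_t(x)}(k_{ℓ_{p_t(x)}}(p_t(x)), y) ] | is at most C·( T/N + √(N·T·log(N/δ)) ). -/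

import Mathlib

open MeasureTheory Finset

/-- The class `L^cvx`: losses `ℓ : [0,1] × {0,1} → [-1,1]` that are convex and
`1`-Lipschitz in the prediction for each label `y ∈ {0,1}`. -/
def IsLcvx (ℓ : ℝ → ℝ → ℝ) : Prop :=
  (∀ p ∈ Set.Icc (0 : ℝ) 1, ∀ y : ℝ, (y = 0 ∨ y = 1) → ℓ p y ∈ Set.Icc (-1 : ℝ) 1) ∧
  (∀ y : ℝ, (y = 0 ∨ y = 1) → ConvexOn ℝ (Set.Icc (0 : ℝ) 1) (fun p => ℓ p y)) ∧
  (∀ y : ℝ, (y = 0 ∨ y = 1) → ∀ p ∈ Set.Icc (0 : ℝ) 1, ∀ q ∈ Set.Icc (0 : ℝ) 1,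
    |ℓ p y - ℓ q y| ≤ |p - q|)

/-- `k` is a best-response selection for `L^cvx`. -/
def IsBestResponse (k : (ℝ → ℝ → ℝ) → ℝ → ℝ) : Prop :=
  ∀ ℓ : ℝ → ℝ → ℝ, IsLcvx ℓ → ∀ q ∈ Set.Icc (0 : ℝ) 1,
    k ℓ q ∈ Set.Icc (0 : ℝ) 1 ∧
    ∀ p ∈ Set.Icc (0 : ℝ) 1,
      q * ℓ (k ℓ q) 1 + (1 - q) * ℓ (k ℓ q) 0 ≤ q * ℓ p 1 + (1 - q) * ℓ p 0


open scoped ENNReal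

/-- Hoeffding's lemma, lintegral form. -/
lemma hoeffding_lintegral {Ω : Type*} [MeasurableSpace Ω] (μ : Measure Ω) [IsProbabilityMeasure μ]
    (c l : ℝ) (hc : 0 < c) (f : Ω → ℝ) (hf : Measurable f) (hbdd : ∀ x, |f x| ≤ c)
    (hmean : ∫ x, f x ∂μ = 0) :
    ∫⁻ x, ENNReal.ofReal (Real.exp (l * f x)) ∂μ ≤ ENNReal.ofReal (Real.exp (l^2 * c^2 / 2)) := by
  set A := Real.exp (-(l*c)) with hA
  set B := Real.exp (l*c) with hB
  set g : Ω → ℝ := fun x => (A + B)/2 + f x * ((B - A)/(2*c)) with hg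
  have key : ∀ x, Real.exp (l * f x) ≤ g x := by
    intro x
    have h1 : -c ≤ f x := (abs_le.1 (hbdd x)).1
    have h2 : f x ≤ c := (abs_le.1 (hbdd x)).2
    have hθ0 : 0 ≤ (c - f x)/(2*c) := div_nonneg (by linarith) (by linarith)
    have hθ1 : 0 ≤ (c + f x)/(2*c) := div_nonneg (by linarith) (by linarith)
    have hsum : (c - f x)/(2*c) + (c + f x)/(2*c) = 1 := by
      field_simp
      ring
    have hcvx := convexOn_exp.2 (Set.mem_univ (-(l*c))) (Set.mem_univ (l*c)) hθ0 hθ1 hsum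
    have harg : (c - f x) / (2 * c) * -(l * c) + (c + f x) / (2 * c) * (l * c) = l * f x := by
      field_simp; ring
    have hgx : (c - f x) / (2 * c) * A + (c + f x) / (2 * c) * B = g x := by
      rw [hg]; field_simp; ring
    simp only [smul_eq_mul] at hcvx
    rw [harg, hgx] at hcvx
    exact hcvx
  have hfi : Integrable f μ :=
    ⟨hf.aestronglyMeasurable, HasFiniteIntegral.of_bounded (C := c)
      (Filter.Eventually.of_forall fun x => by simpa using hbdd x)⟩
  have hgi : Integrable g μ := (integrable_const _).add (hfi.mul_const _)
  have hgint : ∫ x, g x ∂μ = (A + B)/2 := by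
    rw [hg]
    rw [integral_add (integrable_const _) (hfi.mul_const _), integral_const,
      integral_mul_const, hmean]
    simp
  have hgnn : 0 ≤ᵐ[μ] g := Filter.Eventually.of_forall fun x =>
    le_trans (Real.exp_pos _).le (key x)
  calc ∫⁻ x, ENNReal.ofReal (Real.exp (l * f x)) ∂μ
      ≤ ∫⁻ x, ENNReal.ofReal (g x) ∂μ :=
        lintegral_mono fun x => ENNReal.ofReal_le_ofReal (key x)
    _ = ENNReal.ofReal (∫ x, g x ∂μ) :=
        (ofReal_integral_eq_lintegral_ofReal hgi hgnn).symm
    _ ≤ ENNReal.ofReal (Real.exp (l^2 * c^2 / 2)) := by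
        apply ENNReal.ofReal_le_ofReal
        rw [hgint]
        have : (A + B)/2 = Real.cosh (l*c) := by rw [Real.cosh_eq, hA, hB, add_comm]
        rw [this]
        calc Real.cosh (l*c) ≤ Real.exp ((l*c)^2/2) := Real.cosh_le_exp_half_sq _
          _ = Real.exp (l^2*c^2/2) := by ring_nf


section Aux2
variable {Ω : Type*} [MeasurableSpace Ω]

lemma measurable_histSum (f : (t : ℕ) → (Fin t → Ω) → Ω → ℝ)
    (hmeas : ∀ t, Measurable fun p : (Fin t → Ω) × Ω => f t p.1 p.2) (T : ℕ) :
    Measurable fun ω : Fin T → Ω =>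
      ∑ t : Fin T, f t (fun s => ω ⟨s, lt_trans s.2 t.2⟩) (ω t) := by
  apply Finset.measurable_sum
  intro t _
  have h1 : Measurable fun ω : Fin T → Ω =>
      ((fun s : Fin (t : ℕ) => ω ⟨s, lt_trans s.2 t.2⟩, ω t) : (Fin (t : ℕ) → Ω) × Ω) :=
    Measurable.prodMk
      (measurable_pi_lambda _ fun s => measurable_pi_apply _) (measurable_pi_apply t)
  exact (hmeas t).comp h1

omit [MeasurableSpace Ω] in
lemma snoc_lt {T : ℕ} (h : Fin T → Ω) (x : Ω) (j : Fin (T+1)) (hj : (j : ℕ) < T) :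
    (Fin.snoc h x : Fin (T+1) → Ω) j = h ⟨j, hj⟩ := by
  have hjj : j = Fin.castSucc ⟨j.1, hj⟩ := by ext; rfl
  conv_lhs => rw [hjj]
  exact Fin.snoc_castSucc ..

omit [MeasurableSpace Ω] in
lemma histSum_snoc (f : (t : ℕ) → (Fin t → Ω) → Ω → ℝ) (T : ℕ) (h : Fin T → Ω) (x : Ω) :
    ∑ t : Fin (T+1), f t (fun s => (Fin.snoc h x : Fin (T+1) → Ω) ⟨s, lt_trans s.2 t.2⟩)
        ((Fin.snoc h x : Fin (T+1) → Ω) t)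
    = (∑ t : Fin T, f t (fun s => h ⟨s, lt_trans s.2 t.2⟩) (h t)) + f T h x := by
  rw [Fin.sum_univ_castSucc]
  congr 1
  · apply Finset.sum_congr rfl
    intro t _
    have h1 : (Fin.snoc h x : Fin (T+1) → Ω) (Fin.castSucc t) = h t := by simp
    show f (t : ℕ) (fun s => (Fin.snoc h x : Fin (T+1) → Ω) ⟨s, _⟩)
        ((Fin.snoc h x : Fin (T+1) → Ω) (Fin.castSucc t)) = _
    rw [h1]
    congr 1
    funext s
    exact snoc_lt h x _ (lt_trans s.2 t.2)

  · show f (T : ℕ) (fun s : Fin T => (Fin.snoc h x : Fin (T+1) → Ω) ⟨s, _⟩)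
        ((Fin.snoc h x : Fin (T+1) → Ω) (Fin.last T)) = _
    rw [Fin.snoc_last]
    congr 1
    funext s
    exact snoc_lt h x _ s.2

lemma azuma_mgf (μ : Measure Ω) [IsProbabilityMeasure μ] (c l : ℝ) (hc : 0 < c)
    (f : (t : ℕ) → (Fin t → Ω) → Ω → ℝ)
    (hmeas : ∀ t, Measurable fun p : (Fin t → Ω) × Ω => f t p.1 p.2)
    (hbdd : ∀ t h x, |f t h x| ≤ c)
    (hmean : ∀ t (h : Fin t → Ω), ∫ x, f t h x ∂μ = 0) :
    ∀ T : ℕ,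
      ∫⁻ ω, ENNReal.ofReal
          (Real.exp (l * ∑ t : Fin T, f t (fun s => ω ⟨s, lt_trans s.2 t.2⟩) (ω t)))
        ∂(Measure.pi fun _ : Fin T => μ)
      ≤ ENNReal.ofReal (Real.exp (T * (l^2 * c^2 / 2))) := by
  intro T
  induction T with
  | zero =>
      simp [lintegral_const]
  | succ T ih =>
      set ν := Measure.pi fun _ : Fin (T+1) => μ with hν
      set e := MeasurableEquiv.piFinSuccAbove (fun _ : Fin (T+1) => Ω) (Fin.last T) with he
      have hmp : MeasurePreserving e ν (μ.prod (Measure.pi fun _ : Fin T => μ)) := by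
        have := measurePreserving_piFinSuccAbove (fun _ : Fin (T+1) => μ) (Fin.last T)
        exact this
      set F : (Fin (T+1) → Ω) → ENNReal := fun ω => ENNReal.ofReal
          (Real.exp (l * ∑ t : Fin (T+1), f t (fun s => ω ⟨s, lt_trans s.2 t.2⟩) (ω t))) with hF
      have hFmeas : Measurable F :=
        (((measurable_histSum f hmeas (T+1)).const_mul l).exp).ennreal_ofReal
      have hesymm : ∀ (x : Ω) (h : Fin T → Ω), e.symm (x, h) = Fin.snoc h x := by
        intro x h
        show (Fin.insertNthEquiv (fun _ : Fin (T+1) => Ω) (Fin.last T)) (x, h) = Fin.snoc h x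
        simp [Fin.insertNthEquiv, Fin.insertNth_last']
      have step1 : ∫⁻ ω, F ω ∂ν = ∫⁻ p, F (e.symm p) ∂(μ.prod (Measure.pi fun _ : Fin T => μ)) := by
        exact ((MeasurePreserving.symm e hmp).lintegral_comp hFmeas).symm
      rw [step1]
      have hFsymm_meas : Measurable fun p : Ω × (Fin T → Ω) => F (e.symm p) :=
        hFmeas.comp e.symm.measurable
      rw [lintegral_prod_symm _ hFsymm_meas.aemeasurable]
      have inner_bound : ∀ h : Fin T → Ω,
          ∫⁻ x, F (e.symm (x, h)) ∂μ ≤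
            ENNReal.ofReal (Real.exp (l * ∑ t : Fin T, f t (fun s => h ⟨s, lt_trans s.2 t.2⟩) (h t)))
              * ENNReal.ofReal (Real.exp (l^2 * c^2 / 2)) := by
        intro h
        have heq : ∀ x : Ω, F (e.symm (x, h)) =
            ENNReal.ofReal (Real.exp (l * ∑ t : Fin T, f t (fun s => h ⟨s, lt_trans s.2 t.2⟩) (h t)))
              * ENNReal.ofReal (Real.exp (l * f T h x)) := by
          intro x
          rw [hesymm, hF]
          simp only
          rw [histSum_snoc f T h x, mul_add, Real.exp_add, ENNReal.ofReal_mul (Real.exp_nonneg _)]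
        calc ∫⁻ x, F (e.symm (x, h)) ∂μ
            = ENNReal.ofReal (Real.exp (l * ∑ t : Fin T, f t (fun s => h ⟨s, lt_trans s.2 t.2⟩) (h t)))
              * ∫⁻ x, ENNReal.ofReal (Real.exp (l * f T h x)) ∂μ := by
              simp_rw [heq]
              have hm1 : Measurable fun x : Ω => f T h x := (hmeas T).comp measurable_prodMk_left
              rw [lintegral_const_mul _ (((hm1.const_mul l).exp).ennreal_ofReal)]
          _ ≤ _ := by
              apply mul_le_mul_right
              exact hoeffding_lintegral μ c l hc (f T h)
                ((hmeas T).comp measurable_prodMk_left) (hbdd T h) (hmean T h)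
      calc ∫⁻ h, ∫⁻ x, F (e.symm (x, h)) ∂μ ∂(Measure.pi fun _ : Fin T => μ)
          ≤ ∫⁻ h, ENNReal.ofReal
              (Real.exp (l * ∑ t : Fin T, f t (fun s => h ⟨s, lt_trans s.2 t.2⟩) (h t)))
              * ENNReal.ofReal (Real.exp (l^2 * c^2 / 2)) ∂(Measure.pi fun _ : Fin T => μ) :=
            lintegral_mono inner_bound
        _ = (∫⁻ h, ENNReal.ofReal
              (Real.exp (l * ∑ t : Fin T, f t (fun s => h ⟨s, lt_trans s.2 t.2⟩) (h t)))
              ∂(Measure.pi fun _ : Fin T => μ)) * ENNReal.ofReal (Real.exp (l^2 * c^2 / 2)) := by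
            rw [lintegral_mul_const _
              ((((measurable_histSum f hmeas T).const_mul l).exp).ennreal_ofReal)]
        _ ≤ ENNReal.ofReal (Real.exp (T * (l^2 * c^2 / 2)))
              * ENNReal.ofReal (Real.exp (l^2 * c^2 / 2)) := mul_le_mul_left (ih) _
        _ = ENNReal.ofReal (Real.exp ((T+1 : ℕ) * (l^2 * c^2 / 2))) := by
            rw [← ENNReal.ofReal_mul (Real.exp_nonneg _), ← Real.exp_add]
            congr 2
            push_cast
            ring

end Aux2


section Aux3
variable {Ω : Type*} [MeasurableSpace Ω]

lemma azuma_tail (μ : Measure Ω) [IsProbabilityMeasure μ] (c : ℝ) (hc : 0 < c)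
    (f : (t : ℕ) → (Fin t → Ω) → Ω → ℝ)
    (hmeas : ∀ t, Measurable fun p : (Fin t → Ω) × Ω => f t p.1 p.2)
    (hbdd : ∀ t h x, |f t h x| ≤ c)
    (hmean : ∀ t (h : Fin t → Ω), ∫ x, f t h x ∂μ = 0)
    (T : ℕ) (hT : 0 < T) (s : ℝ) (hs : 0 ≤ s) :
    (Measure.pi fun _ : Fin T => μ)
      {ω : Fin T → Ω | s ≤ ∑ t : Fin T, f t (fun i => ω ⟨i, lt_trans i.2 t.2⟩) (ω t)}
      ≤ ENNReal.ofReal (Real.exp (-(s^2) / (2 * T * c^2))) := by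
  have hT0 : (0:ℝ) < T := by exact_mod_cast hT
  set l : ℝ := s / (T * c^2) with hl
  have hl0 : 0 ≤ l := div_nonneg hs (by positivity)
  have hSmeas := measurable_histSum f hmeas T
  have hsub : {ω : Fin T → Ω | s ≤ ∑ t : Fin T, f t (fun i => ω ⟨i, lt_trans i.2 t.2⟩) (ω t)}
      ⊆ {ω : Fin T → Ω | ENNReal.ofReal (Real.exp (l * s)) ≤
          ENNReal.ofReal (Real.exp (l * ∑ t : Fin T, f t (fun i => ω ⟨i, lt_trans i.2 t.2⟩) (ω t)))} :=
    fun ω hω => ENNReal.ofReal_le_ofReal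
      (Real.exp_le_exp.2 (mul_le_mul_of_nonneg_left hω hl0))
  have hεne : ENNReal.ofReal (Real.exp (l * s)) ≠ 0 := by
    simp [Real.exp_pos]
  have hεnetop : ENNReal.ofReal (Real.exp (l * s)) ≠ ⊤ := ENNReal.ofReal_ne_top
  calc (Measure.pi fun _ : Fin T => μ)
        {ω : Fin T → Ω | s ≤ ∑ t : Fin T, f t (fun i => ω ⟨i, lt_trans i.2 t.2⟩) (ω t)}
      ≤ (Measure.pi fun _ : Fin T => μ)
        {ω : Fin T → Ω | ENNReal.ofReal (Real.exp (l * s)) ≤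
          ENNReal.ofReal (Real.exp (l * ∑ t : Fin T, f t (fun i => ω ⟨i, lt_trans i.2 t.2⟩) (ω t)))} :=
        measure_mono hsub
    _ ≤ (∫⁻ ω, ENNReal.ofReal
          (Real.exp (l * ∑ t : Fin T, f t (fun i => ω ⟨i, lt_trans i.2 t.2⟩) (ω t)))
          ∂(Measure.pi fun _ : Fin T => μ)) / ENNReal.ofReal (Real.exp (l * s)) :=
        meas_ge_le_lintegral_div (((hSmeas.const_mul l).exp).ennreal_ofReal).aemeasurable hεne hεnetop
    _ ≤ ENNReal.ofReal (Real.exp (T * (l^2 * c^2 / 2))) / ENNReal.ofReal (Real.exp (l * s)) :=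
        ENNReal.div_le_div_right (azuma_mgf μ c l hc f hmeas hbdd hmean T) _
    _ = ENNReal.ofReal (Real.exp (T * (l^2 * c^2 / 2) - l * s)) := by
        rw [Real.exp_sub, ENNReal.ofReal_div_of_pos (Real.exp_pos _)]
    _ ≤ ENNReal.ofReal (Real.exp (-(s^2) / (2 * T * c^2))) := by
        apply ENNReal.ofReal_le_ofReal
        apply le_of_eq
        congr 1
        rw [hl]
        field_simp
        ring

end Aux3

lemma sqrt_add_le' (a b : ℝ) (ha : 0 ≤ a) (hb : 0 ≤ b) :
    Real.sqrt (a + b) ≤ Real.sqrt a + Real.sqrt b := by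
  have h : a + b ≤ (Real.sqrt a + Real.sqrt b)^2 := by
    nlinarith [Real.sq_sqrt ha, Real.sq_sqrt hb, Real.sqrt_nonneg a, Real.sqrt_nonneg b]
  calc Real.sqrt (a + b) ≤ Real.sqrt ((Real.sqrt a + Real.sqrt b)^2) := Real.sqrt_le_sqrt h
    _ = _ := Real.sqrt_sq (by positivity)

set_option maxHeartbeats 1000000 in
lemma numeric_bound (N T : ℕ) (hN : 0 < N) (hT : 0 < T) (δ : ℝ) (hδ : 0 < δ)
    (hδT : δ ≤ 1 / T) :
    Real.sqrt (8 * T * (((2*(N+1) : ℕ) : ℝ) * Real.log 2 + Real.log (1/δ)))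
      ≤ 100 * ((T : ℝ) / N + Real.sqrt ((N : ℝ) * T * Real.log ((N : ℝ) / δ))) := by
  have hN1 : (1:ℝ) ≤ N := by exact_mod_cast hN
  have hT1 : (1:ℝ) ≤ T := by exact_mod_cast hT
  have hT0 : (0:ℝ) < T := by linarith
  have hN0 : (0:ℝ) < N := by linarith
  have hδ1 : δ ≤ 1 := le_trans hδT (by rw [div_le_one hT0]; exact hT1)
  have hlog2 : (0:ℝ) ≤ Real.log 2 := Real.log_nonneg (by norm_num)
  have hlog2' : Real.log 2 ≤ 1 := le_trans (Real.log_le_sub_one_of_pos (by norm_num)) (by norm_num)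
  have h1δ : (0:ℝ) < 1/δ := by positivity
  have hlogδ : (0:ℝ) ≤ Real.log (1/δ) := Real.log_nonneg (by rw [le_div_iff₀ hδ]; linarith)
  set L : ℝ := Real.log ((N : ℝ)/δ) with hLdef
  have hNδpos : (0:ℝ) < (N:ℝ)/δ := by positivity
  have hL0 : 0 ≤ L := Real.log_nonneg (by rw [le_div_iff₀ hδ]; linarith)
  have hlog1δ_le : Real.log (1/δ) ≤ L := by
    apply Real.log_le_log h1δ
    gcongr
  have hsqNTL : (0:ℝ) ≤ Real.sqrt ((N:ℝ)*T*L) := Real.sqrt_nonneg _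
  have hTN0 : (0:ℝ) ≤ (T:ℝ)*N := by positivity
  have key : Real.sqrt (8*T*(((2*(N+1) : ℕ) : ℝ) * Real.log 2 + Real.log (1/δ)))
      ≤ Real.sqrt (36*((T:ℝ)*N)) + Real.sqrt (9*((N:ℝ)*T*L)) := by
    have h1 : 8*T*(((2*(N+1) : ℕ) : ℝ) * Real.log 2 + Real.log (1/δ))
        ≤ 36*((T:ℝ)*N) + 9*((N:ℝ)*T*L) := by
      push_cast
      nlinarith [mul_nonneg (le_of_lt hT0) hlogδ, mul_nonneg (le_of_lt hT0) hL0,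
        mul_nonneg (mul_nonneg (le_of_lt hT0) hL0) (sub_nonneg.2 hN1),
        mul_nonneg (le_of_lt hT0) (sub_nonneg.2 hlog1δ_le),
        mul_nonneg (mul_nonneg (le_of_lt hT0) hN0.le) (sub_nonneg.2 hlog2'),
        mul_nonneg (le_of_lt hT0) hlog2]
    calc Real.sqrt _ ≤ Real.sqrt (36*((T:ℝ)*N) + 9*((N:ℝ)*T*L)) := Real.sqrt_le_sqrt h1
      _ ≤ _ := sqrt_add_le' _ _ (by positivity) (by positivity)
  have h36 : Real.sqrt (36*((T:ℝ)*N)) = 6*Real.sqrt ((T:ℝ)*N) := by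
    rw [show (36:ℝ)*((T:ℝ)*N) = 6^2*((T:ℝ)*N) by norm_num, Real.sqrt_mul (by norm_num),
      Real.sqrt_sq (by norm_num)]
  have h9 : Real.sqrt (9*((N:ℝ)*T*L)) = 3*Real.sqrt ((N:ℝ)*T*L) := by
    rw [show (9:ℝ)*((N:ℝ)*T*L) = 3^2*((N:ℝ)*T*L) by norm_num, Real.sqrt_mul (by norm_num),
      Real.sqrt_sq (by norm_num)]
  rw [h36, h9] at key
  have hTdivN0 : (0:ℝ) ≤ (T:ℝ)/N := by positivity
  by_cases hcase : (1:ℝ) ≤ L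
  · have hTN : Real.sqrt ((T:ℝ)*N) ≤ Real.sqrt ((N:ℝ)*T*L) := by
      apply Real.sqrt_le_sqrt
      nlinarith [mul_nonneg (mul_nonneg hN0.le hT0.le) (sub_nonneg.2 hcase)]
    linarith
  · push_neg at hcase
    have h3 : (N:ℝ)/δ < 3 := by
      calc (N:ℝ)/δ = Real.exp L := (Real.exp_log hNδpos).symm
        _ < Real.exp 1 := Real.exp_lt_exp.2 hcase
        _ < 3 := lt_trans Real.exp_one_lt_d9 (by norm_num)
    have hTδ : (T:ℝ) ≤ 1/δ := by
      rw [le_div_iff₀ hδ]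
      have h5 := (le_div_iff₀ hT0).1 hδT
      linarith [h5]
    have hNT3 : (N:ℝ)*T < 3 := by
      calc (N:ℝ)*T ≤ (N:ℝ)*(1/δ) := by nlinarith
        _ = (N:ℝ)/δ := by ring
        _ < 3 := h3
    have hN2 : (N:ℝ) ≤ 2 := by
      have h6 : (N:ℝ) < 3 := by nlinarith
      have h7 : N < 3 := by exact_mod_cast h6
      have h8 : N ≤ 2 := by omega
      exact_mod_cast h8
    have hsqrtTN : Real.sqrt ((T:ℝ)*N) ≤ 2 := by
      have h4 : (T:ℝ)*N ≤ 4 := by nlinarith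
      calc Real.sqrt ((T:ℝ)*N) ≤ Real.sqrt 4 := Real.sqrt_le_sqrt h4
        _ = 2 := by rw [show (4:ℝ) = 2^2 by norm_num, Real.sqrt_sq (by norm_num)]
    have hTdivN : (1:ℝ)/2 ≤ (T:ℝ)/N := by
      rw [div_le_div_iff₀ (by norm_num) hN0]
      linarith
    linarith


lemma tail_eq (N T : ℕ) (hT : 0 < T) (δ : ℝ) (hδ : 0 < δ) (hδ1 : δ ≤ 1) :
    ((2^(2*(N+1)) : ℕ) : ℝ) * Real.exp
        (-(Real.sqrt (8*T*(((2*(N+1) : ℕ) : ℝ) * Real.log 2 + Real.log (1/δ)))^2) / (8*T)) = δ := by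
  have hT0 : (0:ℝ) < T := by exact_mod_cast hT
  have hlog2 : (0:ℝ) ≤ Real.log 2 := Real.log_nonneg (by norm_num)
  have hlogδ : (0:ℝ) ≤ Real.log (1/δ) := Real.log_nonneg (by rw [le_div_iff₀ hδ]; linarith)
  have hK0 : (0:ℝ) ≤ 8*T*(((2*(N+1) : ℕ) : ℝ) * Real.log 2 + Real.log (1/δ)) := by positivity
  rw [Real.sq_sqrt hK0]
  have harg : -(8*(T:ℝ)*(((2*(N+1) : ℕ) : ℝ) * Real.log 2 + Real.log (1/δ))) / (8*T)
      = -(((2*(N+1) : ℕ) : ℝ) * Real.log 2 + Real.log (1/δ)) := by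
    field_simp
  rw [harg]
  have hexp : Real.exp (-(((2*(N+1) : ℕ) : ℝ) * Real.log 2 + Real.log (1/δ)))
      = ((2:ℝ)^(2*(N+1)))⁻¹ * δ := by
    rw [neg_add, Real.exp_add, Real.exp_neg, Real.exp_neg, Real.exp_nat_mul,
      Real.exp_log (by norm_num : (0:ℝ) < 2), Real.exp_log (by positivity : (0:ℝ) < 1/δ)]
    rw [one_div, inv_inv]
  rw [hexp]
  push_cast
  have h2 : ((2:ℝ)^(2*(N+1))) ≠ 0 := by positivity
  field_simp


set_option maxHeartbeats 1000000 in
lemma main_aux {X : Type} [MeasurableSpace X] (N T : ℕ) (hT : 0 < T)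
    (D : Measure (X × Bool)) [IsProbabilityMeasure D]
    (A : (t : ℕ) → (Fin t → X × Bool) → X → Fin (N + 1))
    (hA : ∀ t : ℕ, Measurable fun q : (Fin t → X × Bool) × X => A t q.1 q.2)
    (s : ℝ) (hs : 0 ≤ s) :
    ENNReal.ofReal (1 - ((2^(2*(N+1)) : ℕ) : ℝ) * Real.exp (-(s^2) / (8*T)))
      ≤ (Measure.pi fun _ : Fin T => D)
        {ω : Fin T → X × Bool |
          ∀ φ : Fin (N + 1) × Bool → ℝ, (∀ vb, |φ vb| ≤ 1) →
            |(∑ t : Fin T, φ (A t (fun i => ω ⟨i, lt_trans i.2 t.2⟩) (ω t).1, (ω t).2))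
              - ∑ t : Fin T, ∫ z, φ (A t (fun i => ω ⟨i, lt_trans i.2 t.2⟩) z.1, z.2) ∂D| ≤ s} := by
  classical
  set d : Fin (N+1) × Bool → (t : ℕ) → (Fin t → X × Bool) → X × Bool → ℝ :=
    fun vb t h z => if (A t h z.1, z.2) = vb then 1 else 0 with hd
  set Ed : Fin (N+1) × Bool → (t : ℕ) → (Fin t → X × Bool) → ℝ :=
    fun vb t h => ∫ z, d vb t h z ∂D with hEd
  set F : (Fin (N+1) × Bool → Bool) → (t : ℕ) → (Fin t → X × Bool) → X × Bool → ℝ :=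
    fun ε t h z => ∑ vb : Fin (N+1) × Bool,
      (if ε vb then (1:ℝ) else -1) * (d vb t h z - Ed vb t h) with hF
  set M : Fin (N+1) × Bool → (Fin T → X × Bool) → ℝ :=
    fun vb ω => ∑ t : Fin T,
      (d vb t (fun i => ω ⟨i, lt_trans i.2 t.2⟩) (ω t)
        - Ed vb t (fun i => ω ⟨i, lt_trans i.2 t.2⟩)) with hM
  have hd_meas : ∀ (vb : Fin (N+1) × Bool) (t : ℕ),
      Measurable fun p : (Fin t → X × Bool) × (X × Bool) => d vb t p.1 p.2 := by
    intro vb t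
    simp only [hd]
    have h1 : Measurable fun p : (Fin t → X × Bool) × (X × Bool) => (A t p.1 p.2.1, p.2.2) :=
      ((hA t).comp (measurable_fst.prodMk (measurable_fst.comp measurable_snd))).prodMk
        (measurable_snd.comp measurable_snd)
    exact Measurable.ite (h1 (measurableSet_singleton vb)) measurable_const measurable_const
  have hd_nonneg : ∀ vb (t : ℕ) h z, 0 ≤ d vb t h z := by
    intro vb t h z; simp only [hd]; split <;> norm_num
  have hd_le_one : ∀ vb (t : ℕ) h z, d vb t h z ≤ 1 := by
    intro vb t h z; simp only [hd]; split <;> norm_num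
  have hd_sum : ∀ (t : ℕ) (h : Fin t → X × Bool) z,
      ∑ vb : Fin (N+1) × Bool, d vb t h z = 1 := by
    intro t h z; simp only [hd]
    rw [Finset.sum_ite_eq Finset.univ (A t h z.1, z.2) (fun _ => (1:ℝ))]
    simp
  have hd_int : ∀ vb (t : ℕ) (h : Fin t → X × Bool), Integrable (fun z => d vb t h z) D := by
    intro vb t h
    refine ⟨(((hd_meas vb t).comp measurable_prodMk_left)).aestronglyMeasurable, ?_⟩
    apply HasFiniteIntegral.of_bounded (C := 1)
    filter_upwards with z
    rw [Real.norm_eq_abs, abs_le]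
    exact ⟨by linarith [hd_nonneg vb t h z], hd_le_one vb t h z⟩
  have hEd_meas : ∀ vb (t : ℕ), Measurable fun h : Fin t → X × Bool => Ed vb t h := by
    intro vb t
    simp only [hEd]
    exact (MeasureTheory.StronglyMeasurable.integral_prod_right
      (f := fun h z => d vb t h z) ((hd_meas vb t).stronglyMeasurable)).measurable
  have hEd_nonneg : ∀ vb (t : ℕ) (h : Fin t → X × Bool), 0 ≤ Ed vb t h := by
    intro vb t h; simp only [hEd]; exact integral_nonneg (hd_nonneg vb t h)
  have hEd_le_one : ∀ vb (t : ℕ) (h : Fin t → X × Bool), Ed vb t h ≤ 1 := by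
    intro vb t h; simp only [hEd]
    calc ∫ z, d vb t h z ∂D ≤ ∫ _, (1:ℝ) ∂D :=
        integral_mono (hd_int vb t h) (integrable_const 1) (hd_le_one vb t h)
      _ = 1 := by simp
  have hEd_sum : ∀ (t : ℕ) (h : Fin t → X × Bool),
      ∑ vb : Fin (N+1) × Bool, Ed vb t h = 1 := by
    intro t h; simp only [hEd]
    rw [← integral_finset_sum _ (fun vb _ => hd_int vb t h)]
    simp [hd_sum t h]
  have hF_meas : ∀ ε (t : ℕ),
      Measurable fun p : (Fin t → X × Bool) × (X × Bool) => F ε t p.1 p.2 := by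
    intro ε t
    simp only [hF]
    apply Finset.measurable_sum
    intro vb _
    exact ((hd_meas vb t).sub ((hEd_meas vb t).comp measurable_fst)).const_mul _
  have hF_bdd : ∀ ε (t : ℕ) (h : Fin t → X × Bool) z, |F ε t h z| ≤ 2 := by
    intro ε t h z
    simp only [hF]
    calc |∑ vb : Fin (N+1) × Bool, (if ε vb then (1:ℝ) else -1) * (d vb t h z - Ed vb t h)|
        ≤ ∑ vb : Fin (N+1) × Bool,
            |(if ε vb then (1:ℝ) else -1) * (d vb t h z - Ed vb t h)| :=
          Finset.abs_sum_le_sum_abs _ _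
      _ ≤ ∑ vb : Fin (N+1) × Bool, (d vb t h z + Ed vb t h) := by
          apply Finset.sum_le_sum
          intro vb _
          rw [abs_mul]
          have h1 : |if ε vb then (1:ℝ) else -1| = 1 := by split <;> norm_num
          rw [h1, one_mul]
          calc |d vb t h z - Ed vb t h| = |d vb t h z + -(Ed vb t h)| := by
                rw [sub_eq_add_neg]
            _ ≤ |d vb t h z| + |-(Ed vb t h)| := abs_add_le _ _
            _ = d vb t h z + Ed vb t h := by
                rw [abs_neg, abs_of_nonneg (hd_nonneg vb t h z),
                  abs_of_nonneg (hEd_nonneg vb t h)]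
      _ = 2 := by rw [Finset.sum_add_distrib, hd_sum t h z, hEd_sum t h]; norm_num
  have hF_mean : ∀ ε (t : ℕ) (h : Fin t → X × Bool), ∫ z, F ε t h z ∂D = 0 := by
    intro ε t h
    simp only [hF]
    have hswap := integral_finset_sum (μ := D) (s := Finset.univ)
      (f := fun (vb : Fin (N+1) × Bool) (z : X × Bool) =>
        (if ε vb = true then (1:ℝ) else -1) * (d vb t h z - Ed vb t h))
      (fun vb _ => ((hd_int vb t h).sub (integrable_const _)).const_mul _)
    rw [hswap]
    apply Finset.sum_eq_zero
    intro vb _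
    rw [integral_const_mul, integral_sub (hd_int vb t h) (integrable_const _), integral_const]
    simp [hEd]
  have hSM : ∀ (ε : Fin (N+1) × Bool → Bool) (ω : Fin T → X × Bool),
      ∑ t : Fin T, F ε t (fun i => ω ⟨i, lt_trans i.2 t.2⟩) (ω t)
        = ∑ vb : Fin (N+1) × Bool, (if ε vb then (1:ℝ) else -1) * M vb ω := by
    intro ε ω
    simp only [hF, hM]
    rw [Finset.sum_comm]
    apply Finset.sum_congr rfl
    intro vb _
    rw [Finset.mul_sum]
  set G : Set (Fin T → X × Bool) := ⋂ ε : Fin (N+1) × Bool → Bool,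
    {ω | ∑ t : Fin T, F ε t (fun i => ω ⟨i, lt_trans i.2 t.2⟩) (ω t) ≤ s} with hG
  have habs : ∀ ω ∈ G, ∑ vb : Fin (N+1) × Bool, |M vb ω| ≤ s := by
    intro ω hω
    have h1 := Set.mem_iInter.1 hω (fun vb => decide (0 ≤ M vb ω))
    have h2 : ∑ t : Fin T, F (fun vb => decide (0 ≤ M vb ω)) t
        (fun i => ω ⟨i, lt_trans i.2 t.2⟩) (ω t)
        = ∑ vb : Fin (N+1) × Bool, |M vb ω| := by
      rw [hSM]
      apply Finset.sum_congr rfl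
      intro vb _
      by_cases hc : 0 ≤ M vb ω
      · simp [hc, abs_of_nonneg hc]
      · simp [hc, abs_of_neg (lt_of_not_ge hc)]
    rw [← h2]; exact h1
  have hGsub : G ⊆ {ω : Fin T → X × Bool |
      ∀ φ : Fin (N + 1) × Bool → ℝ, (∀ vb, |φ vb| ≤ 1) →
        |(∑ t : Fin T, φ (A t (fun i => ω ⟨i, lt_trans i.2 t.2⟩) (ω t).1, (ω t).2))
          - ∑ t : Fin T, ∫ z, φ (A t (fun i => ω ⟨i, lt_trans i.2 t.2⟩) z.1, z.2) ∂D| ≤ s} := by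
    intro ω hω φ hφ
    have hemp : ∀ t : Fin T,
        φ (A t (fun i => ω ⟨i, lt_trans i.2 t.2⟩) (ω t).1, (ω t).2)
          = ∑ vb : Fin (N+1) × Bool, φ vb * d vb t (fun i => ω ⟨i, lt_trans i.2 t.2⟩) (ω t) := by
      intro t
      simp only [hd, mul_ite, mul_one, mul_zero]
      rw [Finset.sum_ite_eq Finset.univ
        (A t (fun i => ω ⟨i, lt_trans i.2 t.2⟩) (ω t).1, (ω t).2) φ]
      simp
    have hptw : ∀ (t : Fin T) (z : X × Bool),
        φ (A t (fun i => ω ⟨i, lt_trans i.2 t.2⟩) z.1, z.2)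
          = ∑ vb : Fin (N+1) × Bool, φ vb * d vb t (fun i => ω ⟨i, lt_trans i.2 t.2⟩) z := by
      intro t z
      simp only [hd, mul_ite, mul_one, mul_zero]
      rw [Finset.sum_ite_eq Finset.univ
        (A t (fun i => ω ⟨i, lt_trans i.2 t.2⟩) z.1, z.2) φ]
      simp
    have hpop : ∀ t : Fin T,
        ∫ z, φ (A t (fun i => ω ⟨i, lt_trans i.2 t.2⟩) z.1, z.2) ∂D
          = ∑ vb : Fin (N+1) × Bool, φ vb * Ed vb t (fun i => ω ⟨i, lt_trans i.2 t.2⟩) := by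
      intro t
      simp only [hptw t]
      have hswap := integral_finset_sum (μ := D) (s := Finset.univ)
        (f := fun (vb : Fin (N+1) × Bool) (z : X × Bool) =>
          φ vb * d vb t (fun i => ω ⟨i, lt_trans i.2 t.2⟩) z)
        (fun vb _ => (hd_int vb t _).const_mul _)
      rw [hswap]
      apply Finset.sum_congr rfl
      intro vb _
      rw [integral_const_mul]
    have hkey : (∑ t : Fin T, φ (A t (fun i => ω ⟨i, lt_trans i.2 t.2⟩) (ω t).1, (ω t).2))
        - (∑ t : Fin T, ∫ z, φ (A t (fun i => ω ⟨i, lt_trans i.2 t.2⟩) z.1, z.2) ∂D)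
        = ∑ vb : Fin (N+1) × Bool, φ vb * M vb ω := by
      simp only [hemp, hpop]
      rw [← Finset.sum_sub_distrib]
      simp only [← Finset.sum_sub_distrib]
      rw [Finset.sum_comm]
      apply Finset.sum_congr rfl
      intro vb _
      simp only [hM]
      rw [Finset.mul_sum]
      apply Finset.sum_congr rfl
      intro t _
      rw [mul_sub]
    rw [hkey]
    calc |∑ vb : Fin (N+1) × Bool, φ vb * M vb ω|
        ≤ ∑ vb : Fin (N+1) × Bool, |φ vb * M vb ω| := Finset.abs_sum_le_sum_abs _ _
      _ ≤ ∑ vb : Fin (N+1) × Bool, |M vb ω| := by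
          apply Finset.sum_le_sum
          intro vb _
          rw [abs_mul]
          calc |φ vb| * |M vb ω| ≤ 1 * |M vb ω| :=
              mul_le_mul_of_nonneg_right (hφ vb) (abs_nonneg _)
            _ = |M vb ω| := one_mul _
      _ ≤ s := habs ω hω
  have hGc : (Measure.pi fun _ : Fin T => D) Gᶜ
      ≤ ENNReal.ofReal (((2^(2*(N+1)) : ℕ) : ℝ) * Real.exp (-(s^2) / (8*T))) := by
    rw [hG, Set.compl_iInter]
    refine le_trans (measure_iUnion_le _) ?_
    have hone : ∀ ε : Fin (N+1) × Bool → Bool,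
        (Measure.pi fun _ : Fin T => D)
          {ω : Fin T → X × Bool |
            ∑ t : Fin T, F ε t (fun i => ω ⟨i, lt_trans i.2 t.2⟩) (ω t) ≤ s}ᶜ
          ≤ ENNReal.ofReal (Real.exp (-(s^2) / (8*T))) := by
      intro ε
      have hsub2 : {ω : Fin T → X × Bool |
            ∑ t : Fin T, F ε t (fun i => ω ⟨i, lt_trans i.2 t.2⟩) (ω t) ≤ s}ᶜ
          ⊆ {ω : Fin T → X × Bool |
            s ≤ ∑ t : Fin T, F ε t (fun i => ω ⟨i, lt_trans i.2 t.2⟩) (ω t)} :=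
        by
          intro ω hω
          simp only [Set.mem_compl_iff, Set.mem_setOf_eq, not_le] at hω
          exact le_of_lt hω
      refine le_trans (measure_mono hsub2) ?_
      have hexp : -(s^2)/(8*(T:ℝ)) = -(s^2)/(2*T*2^2) := by ring_nf
      rw [hexp]
      exact azuma_tail D 2 (by norm_num) (F ε) (hF_meas ε) (hF_bdd ε) (hF_mean ε) T hT s hs
    refine le_trans (ENNReal.tsum_le_tsum hone) ?_
    rw [tsum_fintype]
    rw [Finset.sum_const]
    have hcard : Fintype.card (Fin (N+1) × Bool → Bool) = 2^(2*(N+1)) := by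
      rw [Fintype.card_fun]
      simp [Fintype.card_prod]
      ring
    rw [Finset.card_univ, hcard]
    rw [nsmul_eq_mul, ← ENNReal.ofReal_natCast (2^(2*(N+1))),
      ← ENNReal.ofReal_mul (by positivity)]
  have h1 : (1:ℝ≥0∞) ≤ (Measure.pi fun _ : Fin T => D) G
      + (Measure.pi fun _ : Fin T => D) Gᶜ := by
    have h0 : (Measure.pi fun _ : Fin T => D) Set.univ = 1 := measure_univ
    calc (1:ℝ≥0∞) = (Measure.pi fun _ : Fin T => D) (G ∪ Gᶜ) := by
          rw [Set.union_compl_self]; exact h0.symm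
      _ ≤ _ := measure_union_le _ _
  refine le_trans ?_ (measure_mono hGsub)
  have h2 : 1 - ENNReal.ofReal (((2^(2*(N+1)) : ℕ) : ℝ) * Real.exp (-(s^2) / (8*T)))
      ≤ (Measure.pi fun _ : Fin T => D) G := by
    rw [tsub_le_iff_right]
    exact le_trans h1 (add_le_add le_rfl hGc)
  refine le_trans ?_ h2
  rw [ENNReal.ofReal_sub _ (by positivity), ENNReal.ofReal_one]


/- **Statement 12.** Concentration of the post-processed loss term `T₁`:
for an i.i.d. sample from `D` and an adaptive predictor rule `(A_t)`, with
probability at least `1 - δ` (for `δ ≤ 1/T`), uniformly over all families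
`(ℓ_v)_{v ∈ Z}` of losses in `L^cvx`, the deviation between the empirical and
population post-processed losses is at most `C (T/N + √(N T log(N/δ)))`. -/
theorem stmt12 :
    ∃ C : ℝ, 0 < C ∧
      ∀ (X : Type) [MeasurableSpace X] (N T : ℕ), 0 < N → 0 < T →
      ∀ (D : Measure (X × Bool)) [IsProbabilityMeasure D],
      ∀ A : (t : ℕ) → (Fin t → X × Bool) → X → Fin (N + 1),
        (∀ t : ℕ, Measurable fun q : (Fin t → X × Bool) × X => A t q.1 q.2) →
      ∀ k : (ℝ → ℝ → ℝ) → ℝ → ℝ, IsBestResponse k →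
      ∀ δ : ℝ, 0 < δ → δ ≤ 1 / T →
        ENNReal.ofReal (1 - δ) ≤
          (Measure.pi fun _ : Fin T => D)
            {ω : Fin T → X × Bool |
              ∀ L : Fin (N + 1) → ℝ → ℝ → ℝ, (∀ v, IsLcvx (L v)) →
                |(∑ t : Fin T,
                    (fun v : Fin (N + 1) =>
                        L v (k (L v) (((v : ℕ) : ℝ) / N))
                          (if (ω t).2 then (1 : ℝ) else 0))
                      (A (t : ℕ) (fun s => ω ⟨(s : ℕ), lt_trans s.2 t.2⟩) (ω t).1))
                  - ∑ t : Fin T, ∫ z : X × Bool,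
                      (fun v : Fin (N + 1) =>
                          L v (k (L v) (((v : ℕ) : ℝ) / N))
                            (if z.2 then (1 : ℝ) else 0))
                        (A (t : ℕ) (fun s => ω ⟨(s : ℕ), lt_trans s.2 t.2⟩) z.1) ∂D|
                ≤ C * ((T : ℝ) / N +
                    Real.sqrt ((N : ℝ) * T * Real.log ((N : ℝ) / δ)))} := by
  refine ⟨100, by norm_num, ?_⟩
  intro X _ N T hN hT D _ A hA k hk δ hδ hδT
  have hT1 : (1:ℝ) ≤ T := by exact_mod_cast hT
  have hδ1 : δ ≤ 1 := le_trans hδT (by rw [div_le_one (by linarith)]; exact hT1)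
  set sb : ℝ := Real.sqrt (8*T*(((2*(N+1) : ℕ) : ℝ) * Real.log 2 + Real.log (1/δ)))
    with hsb_def
  have hs0 : 0 ≤ sb := Real.sqrt_nonneg _
  have hB : ((2^(2*(N+1)) : ℕ) : ℝ) * Real.exp (-(sb^2)/(8*T)) = δ := by
    rw [hsb_def]; exact tail_eq N T hT δ hδ hδ1
  have hmain := main_aux N T hT D A hA sb hs0
  refine le_trans (le_of_eq (by rw [hB])) (le_trans hmain (measure_mono ?_))
  intro ω hω L hL
  have hφ : ∀ vb : Fin (N+1) × Bool,
      |L vb.1 (k (L vb.1) (((vb.1 : ℕ) : ℝ)/N)) (if vb.2 then (1:ℝ) else 0)| ≤ 1 := by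
    intro vb
    have hq : ((vb.1 : ℕ) : ℝ)/N ∈ Set.Icc (0:ℝ) 1 := by
      constructor
      · positivity
      · rw [div_le_one (by exact_mod_cast hN)]
        exact_mod_cast Fin.is_le vb.1
    obtain ⟨hkmem, -⟩ := hk (L vb.1) (hL vb.1) _ hq
    have hy : ((if vb.2 then (1:ℝ) else 0) = 0) ∨ ((if vb.2 then (1:ℝ) else 0) = 1) := by
      cases vb.2 <;> simp
    have hmem := (hL vb.1).1 _ hkmem _ hy
    rw [abs_le]; exact ⟨hmem.1, hmem.2⟩
  have h1 := hω (fun vb : Fin (N+1) × Bool =>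
    L vb.1 (k (L vb.1) (((vb.1 : ℕ) : ℝ)/N)) (if vb.2 then (1:ℝ) else 0)) hφ
  have h2 : sb ≤ 100 * ((T:ℝ)/N + Real.sqrt ((N:ℝ)*T*Real.log ((N:ℝ)/δ))) := by
    rw [hsb_def]; exact numeric_bound N T hN hT δ hδ hδT
  exact le_trans h1 h2
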